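/- In the monoid BS⁺(m,n) with m ≥ 1 and n ≥ 1, if p and q have a common upper bound (i.e. pBS⁺(m,n) ∩ qBS⁺(m,n) ≠ ∅) and θ(p) ≤ θ(q), then stem(p) is a prefix of stem(q), where θ denotes the height (number of occurrences of a in any word representing the element) and stem(p) = b^{c₀}a⋯b^{c_{k-1}}a for the normal form p = b^{c₀}a b^{c₁}⋯b^{c_{k-1}}a b^{c_k}. -/

import Mathlib

/-- Push `b^t` through a digit sequence: returns new digits and leftover carry. -/
def bsPush (m n : ℕ) : ℕ → List ℕ → List ℕ × ℕ
  | t, [] => ([], t)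
  | t, d :: ds =>
    let p := bsPush m n (m * ((t + d) / n)) ds
    ((t + d) % n :: p.1, p.2)

theorem bsPush_append (m n t : ℕ) (d e : List ℕ) :
    bsPush m n t (d ++ e) =
      ((bsPush m n t d).1 ++ (bsPush m n (bsPush m n t d).2 e).1,
        (bsPush m n (bsPush m n t d).2 e).2) := by
  induction d generalizing t with
  | nil => simp [bsPush]
  | cons d0 ds ih => simp [bsPush, ih]

theorem bsPush_mem (m n t : ℕ) (d : List ℕ) :
    ∀ x ∈ (bsPush m n t d).1, x % n = x := by
  induction d generalizing t with
  | nil => simp [bsPush]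
  | cons d0 ds ih =>
    simp only [bsPush, List.mem_cons]
    rintro x (rfl | hx)
    · exact Nat.mod_mod_of_dvd _ dvd_rfl
    · exact ih _ _ hx

theorem div_aux (t x n : ℕ) : (t + x % n) / n + x / n = (t + x) / n := by
  rcases Nat.eq_zero_or_pos n with rfl | hn
  · simp
  · conv_rhs => rw [← Nat.div_add_mod x n]
    rw [show t + (n * (x / n) + x % n) = t + x % n + (x / n) * n by ring,
      Nat.add_mul_div_right _ _ hn]

theorem mod_aux (t x n : ℕ) : (t + x % n) % n = (t + x) % n := by
  conv_rhs => rw [← Nat.div_add_mod x n,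
    show t + (n * (x / n) + x % n) = t + x % n + (x / n) * n by ring,
    Nat.add_mul_mod_self_right]

theorem bsPush_push (m n : ℕ) (e : List ℕ) : ∀ t s,
    (bsPush m n t (bsPush m n s e).1).1 = (bsPush m n (t + s) e).1 ∧
      (bsPush m n t (bsPush m n s e).1).2 + (bsPush m n s e).2
        = (bsPush m n (t + s) e).2 := by
  induction e with
  | nil => intro t s; simp [bsPush]
  | cons e0 es ih =>
    intro t s
    simp only [bsPush]
    have h1 : (t + (s + e0) % n) % n = (t + s + e0) % n := by
      rw [mod_aux]; ring_nf
    have h2 : m * ((t + (s + e0) % n) / n) + m * ((s + e0) / n)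
        = m * ((t + s + e0) / n) := by
      rw [← Nat.mul_add, div_aux]; ring_nf
    obtain ⟨ha, hb⟩ := ih (m * ((t + (s + e0) % n) / n)) (m * ((s + e0) / n))
    rw [h2] at ha hb
    exact ⟨by rw [h1, ha], hb⟩

theorem bsPush_zero (m n : ℕ) (d : List ℕ) (hd : ∀ x ∈ d, x % n = x) :
    bsPush m n 0 d = (d, 0) := by
  induction d with
  | nil => rfl
  | cons d0 ds ih =>
    have h0 : d0 % n = d0 := hd d0 (by simp)
    have hdiv : d0 / n = 0 := by
      rcases Nat.eq_zero_or_pos n with rfl | hn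
      · simp
      · exact Nat.div_eq_of_lt (h0 ▸ Nat.mod_lt _ hn)
    simp [bsPush, h0, hdiv, ih fun x hx => hd x (by simp [hx])]

/-- The normal-form model of `BS⁺(m,n)`: a list of digits (each reduced mod `n`)
together with a tail exponent. -/
abbrev BSModel (m n : ℕ) := { p : List ℕ × ℕ // ∀ x ∈ p.1, x % n = x }

/-- Multiplication in the normal-form model. -/
def bsMul (m n : ℕ) (x y : BSModel m n) : BSModel m n :=
  ⟨(x.1.1 ++ (bsPush m n x.1.2 y.1.1).1, (bsPush m n x.1.2 y.1.1).2 + y.1.2),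
    by
      intro z hz
      rcases List.mem_append.1 hz with h | h
      · exact x.2 z h
      · exact bsPush_mem m n _ _ z h⟩

instance (m n : ℕ) : Monoid (BSModel m n) where
  one := ⟨([], 0), by simp⟩
  mul x y := bsMul m n x y
  mul_assoc x y z := by
    show bsMul m n (bsMul m n x y) z = bsMul m n x (bsMul m n y z)
    apply Subtype.ext
    obtain ⟨h1, h2⟩ := bsPush_push m n z.1.1 (bsPush m n x.1.2 y.1.1).2 y.1.2
    simp only [bsMul]
    refine Prod.ext ?_ ?_
    · simp only [bsPush_append, List.append_assoc, h1]
    · simp only [bsPush_append]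
      omega
  one_mul x := by
    show bsMul m n ⟨([], 0), by simp⟩ x = x
    apply Subtype.ext
    simp only [bsMul, bsPush_zero m n _ x.2]
    simp
  mul_one x := by
    show bsMul m n x ⟨([], 0), by simp⟩ = x
    apply Subtype.ext
    simp [bsMul, bsPush]

theorem bsmodel_mul_def (m n : ℕ) (x y : BSModel m n) :
    (x * y).1 = (x.1.1 ++ (bsPush m n x.1.2 y.1.1).1, (bsPush m n x.1.2 y.1.1).2 + y.1.2) :=
  rfl

theorem digit_div (n d0 : ℕ) (h : d0 % n = d0) : d0 / n = 0 := by
  rcases Nat.eq_zero_or_pos n with rfl | hn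
  · simp
  · exact Nat.div_eq_of_lt (h ▸ Nat.mod_lt _ hn)

/-- The model element corresponding to the generator `a`. -/
def bsAEl (m n : ℕ) : BSModel m n := ⟨([0], 0), by simp⟩

/-- The model element corresponding to the generator `b`. -/
def bsBEl (m n : ℕ) : BSModel m n := ⟨([], 1), by simp⟩

theorem bsBEl_pow (m n j : ℕ) : (bsBEl m n) ^ j = ⟨([], j), by simp⟩ := by
  induction j with
  | zero => rfl
  | succ j ih =>
    rw [pow_succ, ih]
    apply Subtype.ext
    rw [bsmodel_mul_def]
    simp [bsBEl, bsPush]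

/-- The defining relation `a b^m = b^n a` of the Baumslag–Solitar monoid, on the free
monoid on two generators `0 = a`, `1 = b`. -/
def BSRel (m n : ℕ) (x y : FreeMonoid (Fin 2)) : Prop :=
  x = FreeMonoid.of 0 * FreeMonoid.of 1 ^ m ∧ y = FreeMonoid.of 1 ^ n * FreeMonoid.of 0

/-- The Baumslag–Solitar monoid `BS⁺(m,n) = ⟨a, b ∣ a b^m = b^n a⟩⁺`. -/
abbrev BSplus (m n : ℕ) := PresentedMonoid (BSRel m n)

/-- The generator `a` of `BS⁺(m,n)`. -/
def bsA (m n : ℕ) : BSplus m n := PresentedMonoid.of (BSRel m n) 0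

/-- The generator `b` of `BS⁺(m,n)`. -/
def bsB (m n : ℕ) : BSplus m n := PresentedMonoid.of (BSRel m n) 1

/-- The stem `b^{c₀}a b^{c₁}a ⋯ b^{c_{k-1}}a` associated to a digit sequence `c`. -/
def bsStem (m n k : ℕ) (c : Fin k → ℕ) : BSplus m n :=
  (List.ofFn fun i : Fin k => bsB m n ^ (c i) * bsA m n).prod

/-- The homomorphism from `BS⁺(m,n)` to the normal-form model. -/
def bsPhi (m n : ℕ) (hn : 1 ≤ n) : BSplus m n →* BSModel m n :=
  PresentedMonoid.lift (fun i => if i = 0 then bsAEl m n else bsBEl m n) (by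
    rintro x y ⟨rfl, rfl⟩
    simp only [map_mul, map_pow, FreeMonoid.lift_eval_of, if_pos rfl,
      if_neg (by decide : (1 : Fin 2) ≠ 0)]
    rw [bsBEl_pow, bsBEl_pow]
    apply Subtype.ext
    rw [bsmodel_mul_def, bsmodel_mul_def]
    simp [bsAEl, bsPush, Nat.mod_self, Nat.div_self hn])

theorem bsPhi_A (m n : ℕ) (hn : 1 ≤ n) : bsPhi m n hn (bsA m n) = bsAEl m n := rfl

theorem bsPhi_B (m n : ℕ) (hn : 1 ≤ n) : bsPhi m n hn (bsB m n) = bsBEl m n := rfl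

theorem modelStem (m n : ℕ) (cs : List ℕ) (hcs : ∀ x ∈ cs, x % n = x) :
    ((cs.map fun t => bsBEl m n ^ t * bsAEl m n).prod : BSModel m n) = ⟨(cs, 0), hcs⟩ := by
  induction cs with
  | nil => rfl
  | cons c0 cs ih =>
    rw [List.map_cons, List.prod_cons,
      ih (fun x hx => hcs x (List.mem_cons_of_mem _ hx)), bsBEl_pow]
    apply Subtype.ext
    rw [bsmodel_mul_def, bsmodel_mul_def]
    have h0 : c0 % n = c0 := hcs c0 List.mem_cons_self
    simp [bsAEl, bsPush, h0, digit_div n c0 h0,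
      bsPush_zero m n cs (fun x hx => hcs x (List.mem_cons_of_mem _ hx))]

theorem phi_stem (m n : ℕ) (hn : 1 ≤ n) (k : ℕ) (c : Fin k → ℕ)
    (hc : ∀ i, c i % n = c i) :
    bsPhi m n hn (bsStem m n k c)
      = ⟨(List.ofFn c, 0), by
          intro x hx
          obtain ⟨i, rfl⟩ := List.mem_ofFn.1 hx
          exact hc i⟩ := by
  rw [bsStem, map_list_prod, List.map_ofFn]
  have : List.ofFn ((bsPhi m n hn) ∘ fun i : Fin k => bsB m n ^ (c i) * bsA m n) =
      (List.ofFn c).map fun t => bsBEl m n ^ t * bsAEl m n := by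
    rw [List.map_ofFn]
    exact congrArg List.ofFn (funext fun i => by
      simp [Function.comp, map_mul, map_pow, bsPhi_A, bsPhi_B])
  rw [this, modelStem]

theorem stmt_18 (m n : ℕ) (hm : 1 ≤ m) (hn : 1 ≤ n)
    (k l : ℕ) (c : Fin k → ℕ) (ck : ℕ) (d : Fin l → ℕ) (dl : ℕ)
    (hc : ∀ i, c i ≤ n - 1) (hd : ∀ i, d i ≤ n - 1) (hkl : k ≤ l)
    (hub : ∃ x y : BSplus m n,
      bsStem m n k c * bsB m n ^ ck * x = bsStem m n l d * bsB m n ^ dl * y) :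
    ∃ w : BSplus m n, bsStem m n l d = bsStem m n k c * w := by
  obtain ⟨r, rfl⟩ := Nat.exists_eq_add_of_le hkl
  obtain ⟨x, y, hxy⟩ := hub
  have hc' : ∀ i, c i % n = c i := fun i => Nat.mod_eq_of_lt (by have := hc i; omega)
  have hd' : ∀ i, d i % n = d i := fun i => Nat.mod_eq_of_lt (by have := hd i; omega)
  rw [mul_assoc, mul_assoc] at hxy
  have hxy2 := congrArg (bsPhi m n hn) hxy
  simp only [map_mul] at hxy2
  rw [phi_stem m n hn k c hc', phi_stem m n hn (k + r) d hd'] at hxy2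
  have hval := congrArg (fun z : BSModel m n => z.1.1) hxy2
  simp only [bsmodel_mul_def] at hval
  rw [List.ofFn_add (f := fun i : Fin (k + r) => d i), List.append_assoc] at hval
  have hlen : (List.ofFn c).length = (List.ofFn fun i : Fin k => d (Fin.castAdd r i)).length := by
    simp
  obtain ⟨hpref, -⟩ := List.append_inj hval hlen
  have hcd : c = fun i : Fin k => d (Fin.castAdd r i) := List.ofFn_injective hpref
  refine ⟨(List.ofFn fun j : Fin r => bsB m n ^ (d (Fin.natAdd k j)) * bsA m n).prod, ?_⟩
  rw [bsStem, List.ofFn_add, List.prod_append, bsStem, hcd]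
  rfl
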